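/- (Sharpness of the h² Korn constant for plates) For every h ∈ (0,1) there exists a nonzero vector field u^h ∈ H¹(P_h; ℝ³) on the plate P_h = Ω × (−h/2,h/2), with u^h vanishing near ∂Ω × (−h/2,h/2), such that ‖e(u^h)‖² ≤ C h² ‖∇u^h‖² for a constant C independent of h. -/

import Mathlib

open MeasureTheory
open scoped ContDiff

lemma fderiv_comp_fst_apply (ψ : (ℝ×ℝ) → ℝ) (hψ : Differentiable ℝ ψ) (x v : (ℝ×ℝ)×ℝ) :
    fderiv ℝ (fun x : (ℝ×ℝ)×ℝ => ψ x.1) x v = fderiv ℝ ψ x.1 v.1 := by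
  have h : HasFDerivAt (fun x : (ℝ×ℝ)×ℝ => ψ x.1)
      ((fderiv ℝ ψ x.1).comp (ContinuousLinearMap.fst ℝ (ℝ×ℝ) ℝ)) x :=
    (hψ x.1).hasFDerivAt.comp x hasFDerivAt_fst
  rw [h.fderiv]; rfl

lemma fderiv_kirch_apply (ψ : (ℝ×ℝ) → ℝ) (hψ : Differentiable ℝ ψ) (x v : (ℝ×ℝ)×ℝ) :
    fderiv ℝ (fun x : (ℝ×ℝ)×ℝ => -(x.2 * ψ x.1)) x v
      = -(x.2 * fderiv ℝ ψ x.1 v.1 + ψ x.1 * v.2) := by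
  have h2 : HasFDerivAt (fun x : (ℝ×ℝ)×ℝ => ψ x.1)
      ((fderiv ℝ ψ x.1).comp (ContinuousLinearMap.fst ℝ (ℝ×ℝ) ℝ)) x :=
    (hψ x.1).hasFDerivAt.comp x hasFDerivAt_fst
  have h : HasFDerivAt (fun x : (ℝ×ℝ)×ℝ => -(x.2 * ψ x.1))
      (-(x.2 • ((fderiv ℝ ψ x.1).comp (ContinuousLinearMap.fst ℝ (ℝ×ℝ) ℝ))
        + ψ x.1 • (ContinuousLinearMap.snd ℝ (ℝ×ℝ) ℝ))) x :=
    ((hasFDerivAt_snd.mul h2)).neg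
  rw [h.fderiv]
  simp [ContinuousLinearMap.comp_apply]
  try ring

lemma integrableOn_of_cont_bdd {f : (ℝ×ℝ)×ℝ → ℝ} (hf : Continuous f) {s : Set ((ℝ×ℝ)×ℝ)}
    (hs : Bornology.IsBounded s) : IntegrableOn f s :=
  (hf.continuousOn.integrableOn_compact hs.isCompact_closure).mono_set subset_closure

lemma integrableOn_of_cont_bdd2 {f : ℝ×ℝ → ℝ} (hf : Continuous f) {s : Set (ℝ×ℝ)}
    (hs : Bornology.IsBounded s) : IntegrableOn f s :=
  (hf.continuousOn.integrableOn_compact hs.isCompact_closure).mono_set subset_closure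

theorem plate_korn_sharpness (Ω : Set (ℝ × ℝ)) (hΩopen : IsOpen Ω)
    (hΩne : Ω.Nonempty) (hΩbdd : Bornology.IsBounded Ω) :
    ∃ C : ℝ, 0 < C ∧ ∀ h : ℝ, 0 < h → h < 1 →
      ∃ u₁ u₂ u₃ : (ℝ × ℝ) × ℝ → ℝ,
        ContDiff ℝ 1 u₁ ∧ ContDiff ℝ 1 u₂ ∧ ContDiff ℝ 1 u₃ ∧
        (∃ K : Set (ℝ × ℝ), IsCompact K ∧ K ⊆ Ω ∧
          ∀ x : (ℝ × ℝ) × ℝ, x.1 ∉ K → u₁ x = 0 ∧ u₂ x = 0 ∧ u₃ x = 0) ∧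
        (∃ x ∈ Ω ×ˢ Set.Ioo (-(h/2)) (h/2),
          ¬ (u₁ x = 0 ∧ u₂ x = 0 ∧ u₃ x = 0)) ∧
        (∫ x in Ω ×ˢ Set.Ioo (-(h/2)) (h/2),
            (fderiv ℝ u₁ x ((1,0),0))^2
            + 2 * ((fderiv ℝ u₁ x ((0,1),0) + fderiv ℝ u₂ x ((1,0),0)) / 2)^2
            + 2 * ((fderiv ℝ u₁ x ((0,0),1) + fderiv ℝ u₃ x ((1,0),0)) / 2)^2
            + (fderiv ℝ u₂ x ((0,1),0))^2
            + 2 * ((fderiv ℝ u₂ x ((0,0),1) + fderiv ℝ u₃ x ((0,1),0)) / 2)^2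
            + (fderiv ℝ u₃ x ((0,0),1))^2)
          ≤ C * h^2 * (∫ x in Ω ×ˢ Set.Ioo (-(h/2)) (h/2),
              (fderiv ℝ u₁ x ((1,0),0))^2 + (fderiv ℝ u₁ x ((0,1),0))^2
              + (fderiv ℝ u₁ x ((0,0),1))^2
              + (fderiv ℝ u₂ x ((1,0),0))^2 + (fderiv ℝ u₂ x ((0,1),0))^2
              + (fderiv ℝ u₂ x ((0,0),1))^2
              + (fderiv ℝ u₃ x ((1,0),0))^2 + (fderiv ℝ u₃ x ((0,1),0))^2
              + (fderiv ℝ u₃ x ((0,0),1))^2) := by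
  classical
  obtain ⟨c, hc⟩ := hΩne
  obtain ⟨ε, hε, hball⟩ := Metric.isOpen_iff.1 hΩopen c hc
  set K : Set (ℝ×ℝ) := Metric.closedBall c (ε/2) with hKdef
  have hKΩ : K ⊆ Ω := fun p hp => hball (by
    simp only [Metric.mem_closedBall, hKdef] at hp
    exact Metric.mem_ball.2 (lt_of_le_of_lt hp (by linarith)))
  have hKcpt : IsCompact K := isCompact_closedBall _ _
  let f : ContDiffBump c := ⟨ε/4, ε/2, by positivity, by linarith⟩
  set φ : (ℝ×ℝ) → ℝ := ⇑f with hφdef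
  have hφ : ContDiff ℝ ∞ φ := f.contDiff
  have hφd : Differentiable ℝ φ := hφ.differentiable (by simp)
  have hφc : φ c = 1 := f.one_of_mem_closedBall (Metric.mem_closedBall_self (by positivity))
  -- φ and its derivative vanish outside K
  have hφzero : ∀ p : ℝ×ℝ, p ∉ K → φ p = 0 := by
    intro p hp
    refine f.zero_of_le_dist ?_
    simp only [hKdef, Metric.mem_closedBall, not_le] at hp
    exact le_of_lt hp
  have hDφzero : ∀ p : ℝ×ℝ, p ∉ K → fderiv ℝ φ p = 0 := by
    intro p hp
    have hev : φ =ᶠ[nhds p] (fun _ => (0:ℝ)) :=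
      Filter.eventually_of_mem ((Metric.isClosed_closedBall.isOpen_compl).mem_nhds hp)
        (fun q hq => hφzero q hq)
    rw [hev.fderiv_eq, fderiv_fun_const]; rfl
  set g1 : (ℝ×ℝ) → ℝ := fun p => fderiv ℝ φ p (1,0) with hg1def
  set g2 : (ℝ×ℝ) → ℝ := fun p => fderiv ℝ φ p (0,1) with hg2def
  have hDφ : ContDiff ℝ ∞ (fderiv ℝ φ) := hφ.fderiv_right (m := ∞) (by simp)
  have hg1 : ContDiff ℝ ∞ g1 := hDφ.clm_apply contDiff_const
  have hg2 : ContDiff ℝ ∞ g2 := hDφ.clm_apply contDiff_const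
  have hg1d : Differentiable ℝ g1 := hg1.differentiable (by simp)
  have hg2d : Differentiable ℝ g2 := hg2.differentiable (by simp)
  set a11 : (ℝ×ℝ) → ℝ := fun p => fderiv ℝ g1 p (1,0) with ha11def
  set a12 : (ℝ×ℝ) → ℝ := fun p => fderiv ℝ g1 p (0,1) with ha12def
  set a21 : (ℝ×ℝ) → ℝ := fun p => fderiv ℝ g2 p (1,0) with ha21def
  set a22 : (ℝ×ℝ) → ℝ := fun p => fderiv ℝ g2 p (0,1) with ha22def
  have ha11 : Continuous a11 := ((hg1.fderiv_right (m := ∞) (by simp)).clm_apply contDiff_const).continuous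
  have ha12 : Continuous a12 := ((hg1.fderiv_right (m := ∞) (by simp)).clm_apply contDiff_const).continuous
  have ha21 : Continuous a21 := ((hg2.fderiv_right (m := ∞) (by simp)).clm_apply contDiff_const).continuous
  have ha22 : Continuous a22 := ((hg2.fderiv_right (m := ∞) (by simp)).clm_apply contDiff_const).continuous
  set Q : (ℝ×ℝ) → ℝ := fun p => (a11 p)^2 + 2*((a12 p + a21 p)/2)^2 + (a22 p)^2 with hQdef
  set R : (ℝ×ℝ) → ℝ := fun p => (a11 p)^2 + (a12 p)^2 + (a21 p)^2 + (a22 p)^2 with hRdef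
  set G : (ℝ×ℝ) → ℝ := fun p => 2*(g1 p)^2 + 2*(g2 p)^2 with hGdef
  have hQc : Continuous Q := by
    apply Continuous.add; apply Continuous.add
    · exact ha11.pow 2
    · exact (continuous_const.mul (((ha12.add ha21).div_const 2).pow 2))
    · exact ha22.pow 2
  have hRc : Continuous R := by
    apply Continuous.add; apply Continuous.add; apply Continuous.add
    exacts [ha11.pow 2, ha12.pow 2, ha21.pow 2, ha22.pow 2]
  have hGc : Continuous G := by
    exact (continuous_const.mul ((hg1.continuous).pow 2)).add
      (continuous_const.mul ((hg2.continuous).pow 2))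
  have hQ0 : ∀ p, 0 ≤ Q p := fun p => by positivity
  have hG0 : ∀ p, 0 ≤ G p := fun p => by positivity
  -- positivity of ∫_Ω G
  have hIG : 0 < ∫ p in Ω, G p := by
    have hpt : ∃ p, g1 p ≠ 0 ∨ g2 p ≠ 0 := by
      by_contra hcon
      push_neg at hcon
      have hD0 : ∀ p, fderiv ℝ φ p = 0 := by
        intro p
        obtain ⟨h1, h2⟩ := hcon p
        refine ContinuousLinearMap.ext fun v => ?_
        have hv : (v.1 • ((1:ℝ),(0:ℝ)) + v.2 • ((0:ℝ),(1:ℝ))) = v := by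
          simp [Prod.ext_iff]
        calc fderiv ℝ φ p v = fderiv ℝ φ p (v.1 • ((1:ℝ),(0:ℝ)) + v.2 • ((0:ℝ),(1:ℝ))) := by
              rw [hv]
          _ = v.1 • fderiv ℝ φ p ((1:ℝ),(0:ℝ)) + v.2 • fderiv ℝ φ p ((0:ℝ),(1:ℝ)) := by
              rw [map_add, ContinuousLinearMap.map_smul, ContinuousLinearMap.map_smul]
          _ = 0 := by
              have e1 : fderiv ℝ φ p ((1:ℝ),(0:ℝ)) = g1 p := rfl
              have e2 : fderiv ℝ φ p ((0:ℝ),(1:ℝ)) = g2 p := rfl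
              rw [e1, e2, h1, h2]; simp
      have hconst := is_const_of_fderiv_eq_zero hφd hD0 c (c + ((ε:ℝ), (0:ℝ)))
      have hdist : dist (c + ((ε:ℝ), (0:ℝ))) c = ε := by
        rw [dist_eq_norm, add_sub_cancel_left]
        rw [Prod.norm_def]
        simp [Real.norm_eq_abs, abs_of_pos hε, le_of_lt hε]
      have hout : (c + ((ε:ℝ), (0:ℝ))) ∉ K := by
        simp only [hKdef, Metric.mem_closedBall, hdist, not_le]
        linarith
      rw [hφc, hφzero _ hout] at hconst
      exact one_ne_zero hconst
    obtain ⟨p0, hp0⟩ := hpt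
    have hp0K : p0 ∈ K := by
      by_contra hp0K
      have := hDφzero p0 hp0K
      rcases hp0 with h1 | h1 <;>
        [exact h1 (by simp [hg1def, this]); exact h1 (by simp [hg2def, this])]
    have hGp0 : 0 < G p0 := by
      rcases hp0 with h1 | h1 <;> [positivity; positivity]
    rw [setIntegral_pos_iff_support_of_nonneg_ae
      (Filter.Eventually.of_forall fun p => hG0 p)
      (integrableOn_of_cont_bdd2 hGc hΩbdd)]
    have hopen : IsOpen (Function.support G ∩ Ω) :=
      (isOpen_ne.preimage hGc).inter hΩopen
    have hne : (Function.support G ∩ Ω).Nonempty :=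
      ⟨p0, Function.mem_support.2 (ne_of_gt hGp0), hKΩ hp0K⟩
    exact hopen.measure_pos volume hne
  have hIQ : 0 ≤ ∫ p in Ω, Q p := setIntegral_nonneg hΩopen.measurableSet fun p _ => hQ0 p
  refine ⟨max 1 ((∫ p in Ω, Q p) / (4 * ∫ p in Ω, G p)), lt_of_lt_of_le one_pos (le_max_left _ _), ?_⟩
  set C : ℝ := max 1 ((∫ p in Ω, Q p) / (4 * ∫ p in Ω, G p)) with hCdef
  have hC1 : (1:ℝ) ≤ C := le_max_left _ _
  have hQG : (∫ p in Ω, Q p) ≤ 4 * C * ∫ p in Ω, G p := by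
    have h1 : (∫ p in Ω, Q p) / (4 * ∫ p in Ω, G p) ≤ C := le_max_right _ _
    rw [div_le_iff₀ (by linarith)] at h1
    linarith
  intro h hh0 hh1
  set I : Set ℝ := Set.Ioo (-(h/2)) (h/2) with hIdef
  set S : Set ((ℝ×ℝ)×ℝ) := Ω ×ˢ I with hSdef
  have hSbdd : Bornology.IsBounded S := hΩbdd.prod (Metric.isBounded_Ioo _ _)
  have hSmeas : MeasurableSet S := (hΩopen.prod isOpen_Ioo).measurableSet
  set U1 : (ℝ×ℝ)×ℝ → ℝ := fun x => -(x.2 * g1 x.1) with hU1def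
  set U2 : (ℝ×ℝ)×ℝ → ℝ := fun x => -(x.2 * g2 x.1) with hU2def
  set U3 : (ℝ×ℝ)×ℝ → ℝ := fun x => φ x.1 with hU3def
  refine ⟨U1, U2, U3, ?_, ?_, ?_, ?_, ?_, ?_⟩
  · exact ((contDiff_snd.mul ((hg1.of_le (by exact_mod_cast le_top)).comp contDiff_fst)).neg)
  · exact ((contDiff_snd.mul ((hg2.of_le (by exact_mod_cast le_top)).comp contDiff_fst)).neg)
  · exact (hφ.of_le (by exact_mod_cast le_top)).comp contDiff_fst
  · refine ⟨K, hKcpt, hKΩ, fun x hx => ?_⟩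
    have h1 := hDφzero x.1 hx
    have h2 := hφzero x.1 hx
    refine ⟨?_, ?_, ?_⟩ <;> simp [hU1def, hU2def, hU3def, hg1def, hg2def, h1, h2]
  · refine ⟨(c, 0), ⟨hc, by constructor <;> [linarith; linarith]⟩, ?_⟩
    intro hcontra
    have := hcontra.2.2
    rw [hU3def] at this
    simp only at this
    rw [hφc] at this
    exact one_ne_zero this
  · -- the integral inequality
    have hu1 : ∀ x v, fderiv ℝ U1 x v = -(x.2 * fderiv ℝ g1 x.1 v.1 + g1 x.1 * v.2) := by
      intro x v; rw [hU1def]; exact fderiv_kirch_apply g1 hg1d x v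
    have hu2 : ∀ x v, fderiv ℝ U2 x v = -(x.2 * fderiv ℝ g2 x.1 v.1 + g2 x.1 * v.2) := by
      intro x v; rw [hU2def]; exact fderiv_kirch_apply g2 hg2d x v
    have hu3 : ∀ x v, fderiv ℝ U3 x v = fderiv ℝ φ x.1 v.1 := by
      intro x v; rw [hU3def]; exact fderiv_comp_fst_apply φ hφd x v
    have hz1 : ∀ p : ℝ×ℝ, fderiv ℝ g1 p ((0:ℝ),(0:ℝ)) = 0 := fun p => by
      have h0 : (((0:ℝ),(0:ℝ)) : ℝ×ℝ) = 0 := rfl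
      rw [h0, map_zero]
    have hz2 : ∀ p : ℝ×ℝ, fderiv ℝ g2 p ((0:ℝ),(0:ℝ)) = 0 := fun p => by
      have h0 : (((0:ℝ),(0:ℝ)) : ℝ×ℝ) = 0 := rfl
      rw [h0, map_zero]
    have hzφ : ∀ p : ℝ×ℝ, fderiv ℝ φ p ((0:ℝ),(0:ℝ)) = 0 := fun p => by
      have h0 : (((0:ℝ),(0:ℝ)) : ℝ×ℝ) = 0 := rfl
      rw [h0, map_zero]
    have e1 : ∀ p, fderiv ℝ φ p ((1:ℝ),(0:ℝ)) = g1 p := fun _ => rfl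
    have e2 : ∀ p, fderiv ℝ φ p ((0:ℝ),(1:ℝ)) = g2 p := fun _ => rfl
    have hLHSeq : ∀ x : (ℝ×ℝ)×ℝ,
        (fderiv ℝ U1 x ((1,0),0))^2
        + 2 * ((fderiv ℝ U1 x ((0,1),0) + fderiv ℝ U2 x ((1,0),0)) / 2)^2
        + 2 * ((fderiv ℝ U1 x ((0,0),1) + fderiv ℝ U3 x ((1,0),0)) / 2)^2
        + (fderiv ℝ U2 x ((0,1),0))^2
        + 2 * ((fderiv ℝ U2 x ((0,0),1) + fderiv ℝ U3 x ((0,1),0)) / 2)^2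
        + (fderiv ℝ U3 x ((0,0),1))^2 = x.2^2 * Q x.1 := by
      intro x
      simp only [hu1, hu2, hu3, hQdef, ha11def, ha12def, ha21def, ha22def]
      simp only [hz1, hz2, hzφ, e1, e2]
      ring
    have hRHSeq : ∀ x : (ℝ×ℝ)×ℝ,
        (fderiv ℝ U1 x ((1,0),0))^2 + (fderiv ℝ U1 x ((0,1),0))^2
        + (fderiv ℝ U1 x ((0,0),1))^2
        + (fderiv ℝ U2 x ((1,0),0))^2 + (fderiv ℝ U2 x ((0,1),0))^2
        + (fderiv ℝ U2 x ((0,0),1))^2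
        + (fderiv ℝ U3 x ((1,0),0))^2 + (fderiv ℝ U3 x ((0,1),0))^2
        + (fderiv ℝ U3 x ((0,0),1))^2 = x.2^2 * R x.1 + G x.1 := by
      intro x
      simp only [hu1, hu2, hu3, hRdef, hGdef, ha11def, ha12def, ha21def, ha22def]
      simp only [hz1, hz2, hzφ, e1, e2]
      ring
    have hfub : ∀ F : (ℝ×ℝ) → ℝ, Continuous F →
        (∫ x in S, F x.1) = h * ∫ p in Ω, F p := by
      intro F hF
      have hint : IntegrableOn (fun x : (ℝ×ℝ)×ℝ => F x.1) S :=
        integrableOn_of_cont_bdd (hF.comp continuous_fst) hSbdd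
      rw [hSdef] at hint ⊢
      rw [MeasureTheory.Measure.volume_eq_prod] at hint ⊢
      rw [setIntegral_prod _ hint]
      have hvol : (volume I).toReal = h := by
        rw [hIdef, Real.volume_Ioo]
        rw [ENNReal.toReal_ofReal (by linarith)]
        ring
      have hinner : ∀ p : ℝ×ℝ, (∫ y in I, F (p, y).1) = h * F p := by
        intro p
        simp only
        rw [setIntegral_const, measureReal_def, hvol, smul_eq_mul]
      rw [integral_congr_ae (Filter.Eventually.of_forall fun p => hinner p)]
      rw [integral_const_mul]
    have hQint : IntegrableOn (fun x : (ℝ×ℝ)×ℝ => x.2^2 * Q x.1) S :=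
      integrableOn_of_cont_bdd ((continuous_snd.pow 2).mul (hQc.comp continuous_fst)) hSbdd
    have hQint2 : IntegrableOn (fun x : (ℝ×ℝ)×ℝ => h^2/4 * Q x.1) S :=
      integrableOn_of_cont_bdd (continuous_const.mul (hQc.comp continuous_fst)) hSbdd
    have hGint : IntegrableOn (fun x : (ℝ×ℝ)×ℝ => G x.1) S :=
      integrableOn_of_cont_bdd (hGc.comp continuous_fst) hSbdd
    have hRGint : IntegrableOn (fun x : (ℝ×ℝ)×ℝ => x.2^2 * R x.1 + G x.1) S :=
      integrableOn_of_cont_bdd (((continuous_snd.pow 2).mul (hRc.comp continuous_fst)).add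
        (hGc.comp continuous_fst)) hSbdd
    calc (∫ x in S,
            (fderiv ℝ U1 x ((1,0),0))^2
            + 2 * ((fderiv ℝ U1 x ((0,1),0) + fderiv ℝ U2 x ((1,0),0)) / 2)^2
            + 2 * ((fderiv ℝ U1 x ((0,0),1) + fderiv ℝ U3 x ((1,0),0)) / 2)^2
            + (fderiv ℝ U2 x ((0,1),0))^2
            + 2 * ((fderiv ℝ U2 x ((0,0),1) + fderiv ℝ U3 x ((0,1),0)) / 2)^2
            + (fderiv ℝ U3 x ((0,0),1))^2)
        = ∫ x in S, x.2^2 * Q x.1 :=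
          integral_congr_ae (Filter.Eventually.of_forall fun x => hLHSeq x)
      _ ≤ ∫ x in S, h^2/4 * Q x.1 := by
          refine setIntegral_mono_on hQint hQint2 hSmeas fun x hx => ?_
          have hx2 : x.2 ∈ I := hx.2
          rw [hIdef, Set.mem_Ioo] at hx2
          have : x.2^2 ≤ (h/2)^2 := sq_le_sq' (le_of_lt hx2.1) (le_of_lt hx2.2)
          have h24 : (h/2)^2 = h^2/4 := by ring
          rw [h24] at this
          exact mul_le_mul_of_nonneg_right this (hQ0 x.1)
      _ = h^2/4 * ∫ x in S, Q x.1 := integral_const_mul _ _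
      _ = h^2/4 * (h * ∫ p in Ω, Q p) := by rw [hfub Q hQc]
      _ ≤ C * h^2 * (h * ∫ p in Ω, G p) := by
          have hIGnn : 0 ≤ ∫ p in Ω, G p := le_of_lt hIG
          have hh3 : 0 < h^3 := by positivity
          nlinarith [hQG, mul_le_mul_of_nonneg_left hQG (le_of_lt hh3)]
      _ = C * h^2 * ∫ x in S, G x.1 := by rw [hfub G hGc]
      _ ≤ C * h^2 * ∫ x in S, (x.2^2 * R x.1 + G x.1) := by
          refine mul_le_mul_of_nonneg_left ?_ (by nlinarith)
          refine setIntegral_mono_on hGint hRGint hSmeas fun x hx => ?_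
          have hR0 : 0 ≤ R x.1 := by simp only [hRdef]; positivity
          nlinarith [mul_nonneg (sq_nonneg x.2) hR0]
      _ = C * h^2 * ∫ x in S,
            ((fderiv ℝ U1 x ((1,0),0))^2 + (fderiv ℝ U1 x ((0,1),0))^2
            + (fderiv ℝ U1 x ((0,0),1))^2
            + (fderiv ℝ U2 x ((1,0),0))^2 + (fderiv ℝ U2 x ((0,1),0))^2
            + (fderiv ℝ U2 x ((0,0),1))^2
            + (fderiv ℝ U3 x ((1,0),0))^2 + (fderiv ℝ U3 x ((0,1),0))^2
            + (fderiv ℝ U3 x ((0,0),1))^2) := by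
          rw [integral_congr_ae (Filter.Eventually.of_forall fun x => hRHSeq x)]
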